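/- Let X₁,…,X_N be i.i.d. Laplace(α) random variables and Z = ∏ X_i. Define the quantile function Q(p) = F_Z^{−1}(p) for 0 < p < 1. Then Q(p) ~ (1/(N^N α))·(−ln(1−p))^N as p → 1⁻, and Q(p) ~ −(1/(N^N α))·(−ln p)^N as p → 0⁺, assuming the tail asymptotics P(Z > z) ~ C z^{(N−1)/(2N)} e^{−N(αz)^{1/N}} as z → ∞ for some constant C > 0 (and symmetrically for the left tail). -/

import Mathlib

open MeasureTheory ProbabilityTheory Filter Real

lemma key_tendsto {ι : Type*} {l : Filter ι} (N : ℕ) (hN : 0 < N) (α C β : ℝ)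
    (hα : 0 < α) (hC : 0 < C) (u z : ι → ℝ) (hz : Tendsto z l atTop)
    (h : Tendsto (fun t => u t /
        (C * z t ^ β * Real.exp (-(N:ℝ) * (α * z t) ^ (1/(N:ℝ))))) l (nhds 1)) :
    Tendsto (fun t => z t / ((1/((N:ℝ) ^ N * α)) * (-Real.log (u t)) ^ N)) l (nhds 1) := by
  set D : ι → ℝ := fun t => C * z t ^ β * Real.exp (-(N:ℝ) * (α * z t) ^ (1/(N:ℝ))) with hD
  have hNR : (0:ℝ) < N := Nat.cast_pos.2 hN
  have hzpos : ∀ᶠ t in l, 0 < z t := hz.eventually_gt_atTop 0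
  have hDpos : ∀ᶠ t in l, 0 < D t := hzpos.mono fun t ht => by positivity
  have hupos : ∀ᶠ t in l, 0 < u t := by
    filter_upwards [h.eventually (eventually_gt_nhds (by norm_num : (1:ℝ)/2 < 1)), hDpos]
      with t h1 h2
    have : 0 < u t / D t := lt_trans (by norm_num) h1
    rcases div_pos_iff.mp this with ⟨h3, _⟩ | ⟨_, h4⟩
    · exact h3
    · linarith
  have hε : Tendsto (fun t => Real.log (u t / D t)) l (nhds 0) := by
    have := h.log one_ne_zero
    rwa [Real.log_one] at this
  -- log z / (α z)^{1/N} → 0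
  have h0 : Tendsto (fun x : ℝ => Real.log x / x ^ (1/(N:ℝ))) atTop (nhds 0) :=
    (isLittleO_log_rpow_atTop (by positivity)).tendsto_div_nhds_zero
  have hA0 : Tendsto (fun x : ℝ => Real.log x / (α * x) ^ (1/(N:ℝ))) atTop (nhds 0) := by
    have h1 := h0.const_mul (α ^ (1/(N:ℝ)))⁻¹
    rw [mul_zero] at h1
    apply h1.congr'
    filter_upwards [eventually_ge_atTop (0:ℝ)] with x hx
    rw [Real.mul_rpow hα.le hx, div_mul_eq_div_div_swap, inv_mul_eq_div]
  have hA : Tendsto (fun t => Real.log (z t) / (α * z t) ^ (1/(N:ℝ))) l (nhds 0) :=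
    hA0.comp hz
  have hE_top : Tendsto (fun t => (α * z t) ^ (1/(N:ℝ))) l atTop :=
    (tendsto_rpow_atTop (by positivity)).comp (hz.const_mul_atTop hα)
  have hB : Tendsto (fun t => ((α * z t) ^ (1/(N:ℝ)))⁻¹) l (nhds 0) :=
    hE_top.inv_tendsto_atTop
  -- main ratio to 1
  have hB1 : Tendsto (fun t => (-Real.log (u t)) / ((N:ℝ) * (α * z t) ^ (1/(N:ℝ)))) l
      (nhds 1) := by
    have hcomb : Tendsto (fun t => 1 - (β * (Real.log (z t) / (α * z t) ^ (1/(N:ℝ)))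
        + (Real.log C + Real.log (u t / D t)) * ((α * z t) ^ (1/(N:ℝ)))⁻¹) / (N:ℝ)) l
        (nhds 1) := by
      have t1 : Tendsto (fun t => β * (Real.log (z t) / (α * z t) ^ (1/(N:ℝ)))) l
          (nhds 0) := by simpa using hA.const_mul β
      have hεc : Tendsto (fun t => Real.log C + Real.log (u t / D t)) l
          (nhds (Real.log C)) := by simpa using hε.const_add (Real.log C)
      have t2 : Tendsto (fun t => (Real.log C + Real.log (u t / D t))
          * ((α * z t) ^ (1/(N:ℝ)))⁻¹) l (nhds 0) := by simpa using hεc.mul hB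
      have t3 := (t1.add t2).div_const (N:ℝ)
      rw [add_zero, zero_div] at t3
      have t4 := (tendsto_const_nhds (x := (1:ℝ)) (f := l)).sub t3
      rw [sub_zero] at t4
      exact t4
    apply hcomb.congr'
    filter_upwards [hzpos, hDpos, hupos] with t hz' hD' hu'
    have hE' : (0:ℝ) < (α * z t) ^ (1/(N:ℝ)) := Real.rpow_pos_of_pos (by positivity) _
    have hlogu : -Real.log (u t) = (N:ℝ) * (α * z t) ^ (1/(N:ℝ)) - Real.log C
        - β * Real.log (z t) - Real.log (u t / D t) := by
      have hlD : Real.log (D t) = Real.log C + β * Real.log (z t)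
          + (-(N:ℝ) * (α * z t) ^ (1/(N:ℝ))) := by
        rw [hD]
        rw [Real.log_mul (by positivity) (Real.exp_pos _).ne',
          Real.log_mul hC.ne' (by positivity), Real.log_rpow hz', Real.log_exp]
      rw [Real.log_div hu'.ne' hD'.ne', hlD]; ring
    rw [hlogu]
    field_simp
    ring
  have hC1 : Tendsto (fun t =>
      ((-Real.log (u t)) / ((N:ℝ) * (α * z t) ^ (1/(N:ℝ)))) ^ N) l (nhds 1) := by
    simpa using hB1.pow N
  have hC3 : Tendsto (fun t => (-Real.log (u t)) ^ N / ((N:ℝ) ^ N * (α * z t))) l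
      (nhds 1) := by
    apply hC1.congr'
    filter_upwards [hzpos] with t hz'
    rw [div_pow, mul_pow, ← Real.rpow_natCast ((α * z t) ^ (1/(N:ℝ))) N,
      ← Real.rpow_mul (by positivity), one_div, inv_mul_cancel₀ hNR.ne', Real.rpow_one]
  have hfin := hC3.inv₀ one_ne_zero
  rw [inv_one] at hfin
  apply hfin.congr fun t => ?_
  rw [inv_div, one_div_mul_eq_div, div_div_eq_mul_div, mul_comm (z t), mul_assoc]

/-- Quantile asymptotics for the product of `N` i.i.d. `Laplace(α)` random variables:
if `F_Z` is the CDF of `Z = ∏ᵢ Xᵢ`, `Q = F_Z⁻¹`, and the tail asymptotics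
`P(Z > z) ~ C z^{(N−1)/(2N)} e^{−N(αz)^{1/N}}` as `z → ∞` (and symmetrically for
the left tail) hold, then `Q(p) ~ (1/(N^N α))(−ln(1−p))^N` as `p → 1⁻` and
`Q(p) ~ −(1/(N^N α))(−ln p)^N` as `p → 0⁺`. -/
theorem quantile_asymptotics_product_laplace {Ω : Type*} [MeasurableSpace Ω]
    (μ : Measure Ω) [IsProbabilityMeasure μ] (N : ℕ) (hN : 0 < N) (α : ℝ) (hα : 0 < α)
    (X : Fin N → Ω → ℝ) (hXm : ∀ i, Measurable (X i))
    (hInd : iIndepFun X μ)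
    (hlaplace : ∀ i, Measure.map (X i) μ =
      volume.withDensity (fun x => ENNReal.ofReal ((α/2) * Real.exp (-α * |x|))))
    (F : ℝ → ℝ) (hF : ∀ z, F z = (μ {ω | (∏ i, X i ω) ≤ z}).toReal)
    (Q : ℝ → ℝ) (hQ : ∀ p ∈ Set.Ioo (0:ℝ) 1, F (Q p) = p)
    (C C' : ℝ) (hC : 0 < C) (hC' : 0 < C')
    (htail : Tendsto (fun z => (1 - F z) /
        (C * z ^ (((N:ℝ) - 1)/(2*(N:ℝ))) * Real.exp (-(N:ℝ) * (α*z) ^ (1/(N:ℝ)))))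
      atTop (nhds 1))
    (htail' : Tendsto (fun z => F z /
        (C' * (-z) ^ (((N:ℝ) - 1)/(2*(N:ℝ))) * Real.exp (-(N:ℝ) * (-(α*z)) ^ (1/(N:ℝ)))))
      atBot (nhds 1)) :
    Tendsto (fun p => Q p / ((1/((N:ℝ) ^ (N:ℕ) * α)) * (-Real.log (1-p)) ^ (N:ℕ)))
        (nhdsWithin 1 (Set.Iio 1)) (nhds 1) ∧
      Tendsto (fun p => Q p / (-(1/((N:ℝ) ^ (N:ℕ) * α)) * (-Real.log p) ^ (N:ℕ)))
        (nhdsWithin 0 (Set.Ioi 0)) (nhds 1) := by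
  have hFmono : Monotone F := by
    intro a b hab
    rw [hF, hF]
    exact ENNReal.toReal_mono (measure_ne_top μ _)
      (measure_mono fun ω h => le_trans h hab)
  have hFnonneg : ∀ x, 0 ≤ F x := fun x => by rw [hF]; exact ENNReal.toReal_nonneg
  have hFle : ∀ x, F x ≤ 1 := fun x => by
    rw [hF]
    exact ENNReal.toReal_le_of_le_ofReal one_pos.le (by simpa using prob_le_one)
  -- right tail: 1 - F z > 0 eventually at top
  have htpos : ∀ᶠ z in atTop, 0 < 1 - F z := by
    filter_upwards [htail.eventually (eventually_gt_nhds (by norm_num : (1:ℝ)/2 < 1)),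
      eventually_gt_atTop (0:ℝ)] with z h1 h2
    have hd : 0 < C * z ^ (((N:ℝ) - 1)/(2*(N:ℝ))) * Real.exp (-(N:ℝ) * (α*z) ^ (1/(N:ℝ))) := by
      positivity
    have h3 : 0 < (1 - F z) / (C * z ^ (((N:ℝ) - 1)/(2*(N:ℝ)))
        * Real.exp (-(N:ℝ) * (α*z) ^ (1/(N:ℝ)))) := lt_trans (by norm_num) h1
    have := mul_pos h3 hd
    rwa [div_mul_cancel₀ _ hd.ne'] at this
  -- left tail: F z > 0 eventually at bot
  have hbpos : ∀ᶠ z in atBot, 0 < F z := by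
    filter_upwards [htail'.eventually (eventually_gt_nhds (by norm_num : (1:ℝ)/2 < 1)),
      eventually_lt_atBot (0:ℝ)] with z h1 h2
    have hnz : 0 < -z := by linarith
    have hd : 0 < C' * (-z) ^ (((N:ℝ) - 1)/(2*(N:ℝ)))
        * Real.exp (-(N:ℝ) * (-(α*z)) ^ (1/(N:ℝ))) := by positivity
    have h3 : 0 < F z / (C' * (-z) ^ (((N:ℝ) - 1)/(2*(N:ℝ)))
        * Real.exp (-(N:ℝ) * (-(α*z)) ^ (1/(N:ℝ)))) := lt_trans (by norm_num) h1
    have := mul_pos h3 hd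
    rwa [div_mul_cancel₀ _ hd.ne'] at this
  -- Q → ∞ as p → 1⁻
  have hQtop : Tendsto Q (nhdsWithin 1 (Set.Iio 1)) atTop := by
    rw [tendsto_atTop]
    intro M
    obtain ⟨z₀, hz₀, hz₀M⟩ := (htpos.and (eventually_ge_atTop M)).exists
    have hF0 : F z₀ < 1 := by linarith
    filter_upwards [Ioo_mem_nhdsLT_of_mem (⟨hF0, le_refl 1⟩ : (1:ℝ) ∈ Set.Ioc (F z₀) 1)]
      with p hp
    have hp01 : p ∈ Set.Ioo (0:ℝ) 1 := ⟨lt_of_le_of_lt (hFnonneg z₀) hp.1, hp.2⟩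
    by_contra hle
    push_neg at hle
    have : F (Q p) ≤ F z₀ := hFmono (le_of_lt (lt_of_lt_of_le hle hz₀M))
    rw [hQ p hp01] at this
    exact absurd this (not_le.2 hp.1)
  -- Q → -∞ as p → 0⁺
  have hQbot : Tendsto Q (nhdsWithin 0 (Set.Ioi 0)) atBot := by
    rw [tendsto_atBot]
    intro M
    obtain ⟨z₀, hz₀, hz₀M⟩ := (hbpos.and (eventually_le_atBot M)).exists
    filter_upwards [Ioo_mem_nhdsGT_of_mem (⟨le_refl 0, hz₀⟩ : (0:ℝ) ∈ Set.Ico 0 (F z₀))]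
      with p hp
    have hp01 : p ∈ Set.Ioo (0:ℝ) 1 := ⟨hp.1, lt_of_lt_of_le hp.2 (hFle z₀)⟩
    by_contra hle
    push_neg at hle
    have : F z₀ ≤ F (Q p) := hFmono (le_of_lt (lt_of_le_of_lt hz₀M hle))
    rw [hQ p hp01] at this
    exact absurd this (not_le.2 hp.2)
  have hIoo1 : Set.Ioo (0:ℝ) 1 ∈ nhdsWithin (1:ℝ) (Set.Iio 1) :=
    Ioo_mem_nhdsLT_of_mem (⟨one_pos, le_refl 1⟩ : (1:ℝ) ∈ Set.Ioc 0 1)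
  have hIoo0 : Set.Ioo (0:ℝ) 1 ∈ nhdsWithin (0:ℝ) (Set.Ioi 0) :=
    Ioo_mem_nhdsGT_of_mem (⟨le_refl 0, one_pos⟩ : (0:ℝ) ∈ Set.Ico 0 1)
  constructor
  · -- part 1
    have h1 : Tendsto (fun p => (1 - p) /
        (C * Q p ^ (((N:ℝ) - 1)/(2*(N:ℝ)))
          * Real.exp (-(N:ℝ) * (α * Q p) ^ (1/(N:ℝ)))))
        (nhdsWithin 1 (Set.Iio 1)) (nhds 1) := by
      apply (htail.comp hQtop).congr'
      filter_upwards [hIoo1] with p hp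
      simp only [Function.comp_apply]
      rw [hQ p hp]
    exact key_tendsto N hN α C (((N:ℝ) - 1)/(2*(N:ℝ))) hα hC _ _ hQtop h1
  · -- part 2
    have hnegQ : Tendsto (fun p => -Q p) (nhdsWithin 0 (Set.Ioi 0)) atTop :=
      tendsto_neg_atBot_atTop.comp hQbot
    have h2 : Tendsto (fun p => p /
        (C' * (-Q p) ^ (((N:ℝ) - 1)/(2*(N:ℝ)))
          * Real.exp (-(N:ℝ) * (α * (-Q p)) ^ (1/(N:ℝ)))))
        (nhdsWithin 0 (Set.Ioi 0)) (nhds 1) := by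
      apply (htail'.comp hQbot).congr'
      filter_upwards [hIoo0] with p hp
      simp only [Function.comp_apply]
      rw [hQ p hp, neg_mul_eq_mul_neg]
    have h3 := key_tendsto N hN α C' (((N:ℝ) - 1)/(2*(N:ℝ))) hα hC'
      (fun p => p) (fun p => -Q p) hnegQ h2
    apply h3.congr fun p => ?_
    rw [neg_mul, div_neg, neg_div]
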